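/- arXiv:2109.10833 — 3 statements merged into one kernel-verified Lean document; each statement's English description precedes it below -/
import Mathlib

section
/- For the depth-1 QAOA on a (D+1)-regular triangle-free Max 3XOR instance with expectation f(β,γ) = (1/2)·sin(γ)·sin(2β)·(3·cos²(2β)·cos^D(γ) - sin²(2β)·cos^{3D}(γ)), maximizing over β at fixed γ gives sin²(2β) = 1/(cos^{2D}(γ) + 3), and the resulting maximum value equals sin(γ)·cos^D(γ)/√(cos^{2D}(γ) + 3). -/
open Real

theorem stmt_4 (D : ℕ) (hD : 1 ≤ D) (γ : ℝ) (hγ : γ ∈ Set.Ioo 0 (π / 2)) (β : ℝ)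
    (hβ : β ∈ Set.Ioo (0 : ℝ) π)
    (hopt : Real.sin (2 * β) = Real.sqrt (1 / ((Real.cos γ) ^ (2 * D) + 3))) :
    (Real.sin (2 * β)) ^ 2 = 1 / ((Real.cos γ) ^ (2 * D) + 3) ∧
    (∀ β' : ℝ,
        (1 / 2 : ℝ) * Real.sin γ * Real.sin (2 * β') *
            (3 * (Real.cos (2 * β')) ^ 2 * (Real.cos γ) ^ D
              - (Real.sin (2 * β')) ^ 2 * (Real.cos γ) ^ (3 * D))
          ≤ (1 / 2 : ℝ) * Real.sin γ * Real.sin (2 * β) *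
              (3 * (Real.cos (2 * β)) ^ 2 * (Real.cos γ) ^ D
                - (Real.sin (2 * β)) ^ 2 * (Real.cos γ) ^ (3 * D))) ∧
    (1 / 2 : ℝ) * Real.sin γ * Real.sin (2 * β) *
        (3 * (Real.cos (2 * β)) ^ 2 * (Real.cos γ) ^ D
          - (Real.sin (2 * β)) ^ 2 * (Real.cos γ) ^ (3 * D))
      = Real.sin γ * (Real.cos γ) ^ D / Real.sqrt ((Real.cos γ) ^ (2 * D) + 3) := by
  obtain ⟨hγ0, hγ1⟩ := hγ
  have hπ : (0:ℝ) < π := Real.pi_pos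
  have hc0 : 0 < Real.cos γ := Real.cos_pos_of_mem_Ioo ⟨by linarith, hγ1⟩
  have hc1 : Real.cos γ ≤ 1 := Real.cos_le_one γ
  have hsγ : 0 < Real.sin γ := Real.sin_pos_of_pos_of_lt_pi hγ0 (by linarith)
  have ht0 : 0 < Real.cos γ ^ (2 * D) := pow_pos hc0 _
  have ht1 : Real.cos γ ^ (2 * D) ≤ 1 := pow_le_one₀ hc0.le hc1
  have hden : (0:ℝ) < Real.cos γ ^ (2 * D) + 3 := by linarith
  have hcD0 : 0 < Real.cos γ ^ D := pow_pos hc0 _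
  have h3D : Real.cos γ ^ (3 * D) = Real.cos γ ^ D * Real.cos γ ^ (2 * D) := by
    rw [← pow_add]; ring_nf
  have hs2 : Real.sin (2 * β) ^ 2 = 1 / (Real.cos γ ^ (2 * D) + 3) := by
    rw [hopt, Real.sq_sqrt]; positivity
  have hshalf : 1 / 2 ≤ Real.sin (2 * β) := by
    rw [hopt]
    have h14 : (1:ℝ)/4 ≤ 1 / (Real.cos γ ^ (2 * D) + 3) := by
      rw [div_le_div_iff₀ (by norm_num) hden]; linarith
    calc (1:ℝ)/2 = Real.sqrt (1/4) := by
          rw [show (1:ℝ)/4 = (1/2)^2 by norm_num, Real.sqrt_sq (by norm_num)]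
      _ ≤ _ := Real.sqrt_le_sqrt h14
  have hs2' : Real.sin (2 * β) ^ 2 * (Real.cos γ ^ (2 * D) + 3) = 1 := by
    rw [hs2]; field_simp
  refine ⟨hs2, ?_, ?_⟩
  · intro β'
    set t := Real.cos γ ^ (2 * D) with ht
    set cD := Real.cos γ ^ D with hcD
    set u := Real.sin (2 * β') with hu
    set s := Real.sin (2 * β) with hs
    have hu1 : -1 ≤ u := Real.neg_one_le_sin _
    have hcos1 : Real.cos (2 * β') ^ 2 = 1 - u ^ 2 := Real.cos_sq' _
    have hcos2 : Real.cos (2 * β) ^ 2 = 1 - s ^ 2 := Real.cos_sq' _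
    rw [hcos1, hcos2, h3D]
    have hE : 3 * s - (t + 3) * s ^ 3 - (3 * u - (t + 3) * u ^ 3)
        = (t + 3) * (s - u) ^ 2 * (2 * s + u) := by
      linear_combination (-3 * (s - u)) * hs2'
    nlinarith [mul_nonneg (mul_nonneg hsγ.le hcD0.le)
        (mul_nonneg (mul_nonneg hden.le (sq_nonneg (s - u)))
          (by linarith : (0:ℝ) ≤ 2 * s + u)),
      mul_pos hsγ hcD0]
  · have hr0 : 0 < Real.sqrt (Real.cos γ ^ (2 * D) + 3) := Real.sqrt_pos.mpr hden
    have hr : Real.sqrt (Real.cos γ ^ (2 * D) + 3) ^ 2 = Real.cos γ ^ (2 * D) + 3 :=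
      Real.sq_sqrt hden.le
    have hseq : Real.sin (2 * β) = (Real.sqrt (Real.cos γ ^ (2 * D) + 3))⁻¹ := by
      rw [hopt, one_div, Real.sqrt_inv]
    have hcos2 : Real.cos (2 * β) ^ 2 = 1 - Real.sin (2 * β) ^ 2 := Real.cos_sq' _
    rw [hcos2, hs2, h3D, hseq]
    set r := Real.sqrt (Real.cos γ ^ (2 * D) + 3) with hrdef
    field_simp
    ring
end

section
/- The function t ↦ t/√(1 + 3·e^{t²}) on (0, ∞) attains its maximum at the unique t > 0 satisfying e^{-t²} = 3(t² - 1), and this maximizer t₀ satisfies 1.05 < t₀ < 1.06, with maximum value between 0.331 and 0.332. -/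
open Real Set

-- g is the derivative-sign function
noncomputable def gfun (t : ℝ) : ℝ := Real.exp (-(t ^ 2)) - 3 * (t ^ 2 - 1)

lemma gfun_hasDeriv (x : ℝ) :
    HasDerivAt gfun (Real.exp (-(x ^ 2)) * (-(2 * x)) - 3 * (2 * x)) x := by
  have h1 : HasDerivAt (fun t : ℝ => t ^ 2) (2 * x) x := by
    simpa using hasDerivAt_pow 2 x
  have h2 : HasDerivAt (fun t : ℝ => Real.exp (-(t ^ 2)))
      (Real.exp (-(x ^ 2)) * (-(2 * x))) x := h1.neg.exp
  have h3 : HasDerivAt (fun t : ℝ => 3 * (t ^ 2 - 1)) (3 * (2 * x)) x :=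
    (h1.sub_const 1).const_mul 3
  exact h2.sub h3

lemma gfun_anti : StrictAntiOn gfun (Set.Ici 0) := by
  apply strictAntiOn_of_deriv_neg (convex_Ici 0)
  · exact (Continuous.sub (by continuity) (by continuity)).continuousOn
  · intro x hx
    rw [interior_Ici] at hx
    rw [(gfun_hasDeriv x).deriv]
    have hx' : (0:ℝ) < x := hx
    have h := Real.exp_pos (-(x ^ 2))
    nlinarith [mul_pos h hx']

lemma expA : Real.exp 1.10986225 < 3.034 := by
  have h1 : (1.10986225 : ℝ) = 1 + 0.10986225 := by norm_num
  rw [h1, Real.exp_add]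
  have h2 : Real.exp 0.10986225 ≤
      (∑ m ∈ Finset.range 4, (0.10986225 : ℝ) ^ m / m.factorial) +
      (0.10986225 : ℝ) ^ 4 * (4 + 1) / (Nat.factorial 4 * 4) :=
    Real.exp_bound' (by norm_num) (by norm_num) (by norm_num)
  have h3 : (∑ m ∈ Finset.range 4, (0.10986225 : ℝ) ^ m / m.factorial) +
      (0.10986225 : ℝ) ^ 4 * (4 + 1) / (Nat.factorial 4 * 4) < 1.11613 := by
    rw [Finset.sum_range_succ, Finset.sum_range_succ, Finset.sum_range_succ,
      Finset.sum_range_succ, Finset.sum_range_zero]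
    norm_num [Nat.factorial]
  have h4 := Real.exp_one_lt_d9
  nlinarith [Real.exp_pos (0.10986225 : ℝ), Real.exp_pos (1:ℝ)]

lemma expB : (3.0315 : ℝ) < Real.exp 1.11007296 := by
  have h2 := Real.sum_le_exp_of_nonneg (x := (1.11007296 : ℝ)) (by norm_num) 6
  refine lt_of_lt_of_le ?_ h2
  rw [Finset.sum_range_succ, Finset.sum_range_succ, Finset.sum_range_succ,
    Finset.sum_range_succ, Finset.sum_range_succ, Finset.sum_range_succ,
    Finset.sum_range_zero]
  norm_num [Nat.factorial]

lemma g_a_pos : 0 < gfun 1.0535 := by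
  unfold gfun
  have ha : ((1.0535 : ℝ) ^ 2) = 1.10986225 := by norm_num
  rw [ha, Real.exp_neg]
  have h := expA
  have hp := Real.exp_pos (1.10986225 : ℝ)
  have hinv : (Real.exp 1.10986225)⁻¹ * Real.exp 1.10986225 = 1 :=
    inv_mul_cancel₀ hp.ne'
  have hip : 0 < (Real.exp 1.10986225)⁻¹ := inv_pos.2 hp
  nlinarith

lemma g_b_neg : gfun 1.0536 < 0 := by
  unfold gfun
  have hb : ((1.0536 : ℝ) ^ 2) = 1.11007296 := by norm_num
  rw [hb, Real.exp_neg]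
  have h := expB
  have hp := Real.exp_pos (1.11007296 : ℝ)
  have hinv : (Real.exp 1.11007296)⁻¹ * Real.exp 1.11007296 = 1 :=
    inv_mul_cancel₀ hp.ne'
  have hip : 0 < (Real.exp 1.11007296)⁻¹ := inv_pos.2 hp
  nlinarith

noncomputable def ffun (t : ℝ) : ℝ := t / Real.sqrt (1 + 3 * Real.exp (t ^ 2))

lemma u_pos (t : ℝ) : 0 < 1 + 3 * Real.exp (t ^ 2) := by positivity

lemma ffun_hasDeriv (x : ℝ) :
    HasDerivAt ffun
      ((1 * Real.sqrt (1 + 3 * Real.exp (x ^ 2)) -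
        x * (3 * (Real.exp (x ^ 2) * (2 * x)) / (2 * Real.sqrt (1 + 3 * Real.exp (x ^ 2))))) /
        Real.sqrt (1 + 3 * Real.exp (x ^ 2)) ^ 2) x := by
  have h1 : HasDerivAt (fun t : ℝ => t ^ 2) (2 * x) x := by simpa using hasDerivAt_pow 2 x
  have h2 : HasDerivAt (fun t : ℝ => 1 + 3 * Real.exp (t ^ 2))
      (3 * (Real.exp (x ^ 2) * (2 * x))) x := (h1.exp.const_mul 3).const_add 1
  have h3 := h2.sqrt (u_pos x).ne'
  exact (hasDerivAt_id x).div h3 (Real.sqrt_pos.2 (u_pos x)).ne'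

lemma ffun_deriv (x : ℝ) :
    deriv ffun x = Real.exp (x ^ 2) * gfun x /
      ((1 + 3 * Real.exp (x ^ 2)) * Real.sqrt (1 + 3 * Real.exp (x ^ 2))) := by
  rw [(ffun_hasDeriv x).deriv]
  have hu := u_pos x
  have hs : 0 < Real.sqrt (1 + 3 * Real.exp (x ^ 2)) := Real.sqrt_pos.2 hu
  have hsq : Real.sqrt (1 + 3 * Real.exp (x ^ 2)) ^ 2 = 1 + 3 * Real.exp (x ^ 2) :=
    Real.sq_sqrt hu.le
  have hexp : Real.exp (-(x ^ 2)) * Real.exp (x ^ 2) = 1 := by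
    rw [← Real.exp_add]; simp
  unfold gfun
  rw [div_eq_div_iff (by positivity) (by positivity)]
  field_simp
  linear_combination ((1 + 3 * Real.exp (x ^ 2)) - Real.exp (-(x ^ 2)) * Real.exp (x ^ 2)
      + 3 * x ^ 2 * Real.exp (x ^ 2) - 3 * Real.exp (x ^ 2)) * hsq
    - (1 + 3 * Real.exp (x ^ 2)) * hexp

lemma ffun_diff : Differentiable ℝ ffun := fun x => (ffun_hasDeriv x).differentiableAt

lemma ffun_mono {c : ℝ} (hc : 0 < c) (hgc : gfun c = 0) : StrictMonoOn ffun (Set.Icc 0 c) := by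
  apply strictMonoOn_of_deriv_pos (convex_Icc 0 c) ffun_diff.continuous.continuousOn
  intro x hx
  rw [interior_Icc] at hx
  rw [ffun_deriv x]
  have hg : 0 < gfun x := by
    have := gfun_anti (Set.mem_Ici.2 hx.1.le) (Set.mem_Ici.2 hc.le) hx.2
    rwa [hgc] at this
  have hu := u_pos x
  exact div_pos (mul_pos (Real.exp_pos _) hg) (mul_pos hu (Real.sqrt_pos.2 hu))

lemma ffun_anti {c : ℝ} (hc : 0 < c) (hgc : gfun c = 0) : StrictAntiOn ffun (Set.Ici c) := by
  apply strictAntiOn_of_deriv_neg (convex_Ici c) ffun_diff.continuous.continuousOn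
  intro x hx
  rw [interior_Ici] at hx
  rw [ffun_deriv x]
  have hg : gfun x < 0 := by
    have := gfun_anti (Set.mem_Ici.2 hc.le) (Set.mem_Ici.2 (hc.trans hx).le) hx
    rwa [hgc] at this
  have hu := u_pos x
  exact div_neg_of_neg_of_pos (mul_neg_of_pos_of_neg (Real.exp_pos _) hg)
    (mul_pos hu (Real.sqrt_pos.2 hu))

theorem stmt_5 :
    ∃ t₀ : ℝ, 0 < t₀ ∧
      Real.exp (-(t₀ ^ 2)) = 3 * (t₀ ^ 2 - 1) ∧
      (∀ t : ℝ, 0 < t → Real.exp (-(t ^ 2)) = 3 * (t ^ 2 - 1) → t = t₀) ∧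
      IsMaxOn (fun t : ℝ => t / Real.sqrt (1 + 3 * Real.exp (t ^ 2))) (Set.Ioi 0) t₀ ∧
      1.05 < t₀ ∧ t₀ < 1.06 ∧
      0.331 < t₀ / Real.sqrt (1 + 3 * Real.exp (t₀ ^ 2)) ∧
      t₀ / Real.sqrt (1 + 3 * Real.exp (t₀ ^ 2)) < 0.332 := by
  -- existence of root via IVT
  have hcont : ContinuousOn gfun (Set.Icc 1.0535 1.0536) := by
    unfold gfun; fun_prop
  have hivt := intermediate_value_Icc' (by norm_num : (1.0535:ℝ) ≤ 1.0536) hcont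
  have h0 : (0:ℝ) ∈ Set.Icc (gfun 1.0536) (gfun 1.0535) := ⟨g_b_neg.le, g_a_pos.le⟩
  obtain ⟨t₀, ht₀mem, ht₀⟩ := hivt h0
  have hane : t₀ ≠ 1.0535 := by rintro rfl; exact g_a_pos.ne' ht₀
  have hbne : t₀ ≠ 1.0536 := by rintro rfl; exact g_b_neg.ne ht₀
  have halt : (1.0535:ℝ) < t₀ := lt_of_le_of_ne ht₀mem.1 (Ne.symm hane)
  have hblt : t₀ < 1.0536 := lt_of_le_of_ne ht₀mem.2 hbne
  have ht₀pos : 0 < t₀ := by linarith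
  have hgz : Real.exp (-(t₀ ^ 2)) = 3 * (t₀ ^ 2 - 1) := by
    have := ht₀; unfold gfun at this; linarith
  have h1 : (1:ℝ) < t₀ ^ 2 := by nlinarith
  have hval : t₀ / Real.sqrt (1 + 3 * Real.exp (t₀ ^ 2)) = Real.sqrt (t₀ ^ 2 - 1) := by
    have hep := Real.exp_pos (t₀ ^ 2)
    have hexp : Real.exp (-(t₀ ^ 2)) * Real.exp (t₀ ^ 2) = 1 := by
      rw [← Real.exp_add]; simp
    have hu : 1 + 3 * Real.exp (t₀ ^ 2) = t₀ ^ 2 / (t₀ ^ 2 - 1) := by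
      have h2 : 3 * (t₀ ^ 2 - 1) * Real.exp (t₀ ^ 2) = 1 := by rw [← hgz]; exact hexp
      have hne : t₀ ^ 2 - 1 ≠ 0 := by nlinarith
      rw [eq_div_iff hne]
      nlinarith
    rw [hu, Real.sqrt_div (by positivity) _, Real.sqrt_sq ht₀pos.le]
    have hsp : 0 < Real.sqrt (t₀ ^ 2 - 1) := Real.sqrt_pos.2 (by linarith)
    field_simp
  refine ⟨t₀, ht₀pos, hgz, ?_, ?_, by linarith, by linarith, ?_, ?_⟩
  · -- uniqueness
    intro t ht hgt
    have hgt0 : gfun t = 0 := by unfold gfun; linarith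
    exact gfun_anti.injOn (Set.mem_Ici.2 ht.le) (Set.mem_Ici.2 ht₀pos.le)
      (by rw [hgt0, ht₀])
  · -- IsMaxOn
    intro t ht
    simp only [Set.mem_Ioi] at ht
    simp only [Set.mem_setOf_eq]
    rcases le_total t t₀ with h | h
    · exact (ffun_mono ht₀pos ht₀).monotoneOn ⟨ht.le, h⟩ ⟨ht₀pos.le, le_refl _⟩ h
    · exact (ffun_anti ht₀pos ht₀).antitoneOn (Set.mem_Ici.2 (le_refl _))
        (Set.mem_Ici.2 h) h
  · rw [hval, show ((0.331:ℝ) = 0.331) from rfl]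
    rw [show ((0.331:ℝ) < Real.sqrt (t₀ ^ 2 - 1)) ↔ ((0.331:ℝ)^2 < t₀ ^ 2 - 1) from
      Real.lt_sqrt (by positivity)]
    nlinarith
  · rw [hval]
    rw [show (Real.sqrt (t₀ ^ 2 - 1) < (0.332:ℝ)) ↔ (t₀ ^ 2 - 1 < (0.332:ℝ)^2) from
      Real.sqrt_lt' (by norm_num)]
    nlinarith
end

section
/- Let k ≥ 2, D ≥ 1 be integers and let γ ∈ (0, π/2), β ∈ (0, π/2) be a critical point of f(β,γ) = -(1/4)·sin(γ)·i·((cos(2β) + i·sin(2β)·cos^D(γ))^k - (cos(2β) - i·sin(2β)·cos^D(γ))^k) with respect to both β and γ. Then sin(2β) = cos(γ)/(sin(γ)·√(kD)), i.e., q = (c/s)·√(1/(kD)). -/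
open Real

noncomputable def qaoaExpr (k D : ℕ) (β γ : ℝ) : ℂ :=
  -(1 / 4 : ℂ) * (Real.sin γ : ℂ) * Complex.I *
    (((Real.cos (2 * β) : ℂ) + Complex.I * (Real.sin (2 * β) : ℂ) * (Real.cos γ : ℂ) ^ D) ^ k
      - ((Real.cos (2 * β) : ℂ) - Complex.I * (Real.sin (2 * β) : ℂ) * (Real.cos γ : ℂ) ^ D) ^ k)

set_option maxHeartbeats 1000000 in
theorem stmt_7 (k D : ℕ) (hk : 2 ≤ k) (hD : 1 ≤ D) (β γ : ℝ)
    (hβ : β ∈ Set.Ioo 0 (π / 2)) (hγ : γ ∈ Set.Ioo 0 (π / 2))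
    (hcritβ : deriv (fun b : ℝ => qaoaExpr k D b γ) β = 0)
    (hcritγ : deriv (fun g : ℝ => qaoaExpr k D β g) γ = 0) :
    Real.sin (2 * β) = Real.cos γ / (Real.sin γ * Real.sqrt (k * D)) := by
  obtain ⟨hβ0, hβ1⟩ := hβ
  obtain ⟨hγ0, hγ1⟩ := hγ
  have hpi := Real.pi_pos
  have hq : 0 < Real.sin (2 * β) := Real.sin_pos_of_pos_of_lt_pi (by linarith) (by linarith)
  have hs : 0 < Real.sin γ := Real.sin_pos_of_pos_of_lt_pi hγ0 (by linarith)
  have hc : 0 < Real.cos γ := Real.cos_pos_of_mem_Ioo ⟨by linarith, hγ1⟩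
  -- derivative in β
  have hderβ : HasDerivAt (fun b : ℝ => qaoaExpr k D b γ)
      (-(1 / 4 : ℂ) * (Real.sin γ : ℂ) * Complex.I *
        ((((-Real.sin (2*β)*2 : ℝ) : ℂ) + Complex.I * ((Real.cos (2*β)*2 : ℝ) : ℂ) * (Real.cos γ : ℂ)^D) •
            ((k:ℂ) * ((Real.cos (2*β):ℂ) + Complex.I * (Real.sin (2*β):ℂ) * (Real.cos γ:ℂ)^D) ^ (k-1))
          - (((-Real.sin (2*β)*2 : ℝ) : ℂ) - Complex.I * ((Real.cos (2*β)*2 : ℝ) : ℂ) * (Real.cos γ : ℂ)^D) •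
            ((k:ℂ) * ((Real.cos (2*β):ℂ) - Complex.I * (Real.sin (2*β):ℂ) * (Real.cos γ:ℂ)^D) ^ (k-1)))) β := by
    have h2 : HasDerivAt (fun b : ℝ => 2 * b) 2 β := by
      simpa using (hasDerivAt_id β).const_mul 2
    have hcos : HasDerivAt (fun b : ℝ => Real.cos (2*b)) (-Real.sin (2*β)*2) β :=
      (Real.hasDerivAt_cos (2*β)).comp β h2
    have hsin : HasDerivAt (fun b : ℝ => Real.sin (2*b)) (Real.cos (2*β)*2) β :=
      (Real.hasDerivAt_sin (2*β)).comp β h2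
    have hz : HasDerivAt (fun b : ℝ => ((Real.cos (2*b):ℝ):ℂ) + Complex.I * ((Real.sin (2*b):ℝ):ℂ) * (Real.cos γ:ℂ)^D)
        (((-Real.sin (2*β)*2 : ℝ) : ℂ) + Complex.I * ((Real.cos (2*β)*2 : ℝ) : ℂ) * (Real.cos γ : ℂ)^D) β :=
      hcos.ofReal_comp.add ((hsin.ofReal_comp.const_mul Complex.I).mul_const _)
    have hzb : HasDerivAt (fun b : ℝ => ((Real.cos (2*b):ℝ):ℂ) - Complex.I * ((Real.sin (2*b):ℝ):ℂ) * (Real.cos γ:ℂ)^D)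
        (((-Real.sin (2*β)*2 : ℝ) : ℂ) - Complex.I * ((Real.cos (2*β)*2 : ℝ) : ℂ) * (Real.cos γ : ℂ)^D) β :=
      hcos.ofReal_comp.sub ((hsin.ofReal_comp.const_mul Complex.I).mul_const _)
    exact (((hasDerivAt_pow k _).scomp β hz).sub ((hasDerivAt_pow k _).scomp β hzb)).const_mul _
  -- derivative in γ
  have hderγ : HasDerivAt (fun g : ℝ => qaoaExpr k D β g)
      (-(1 / 4 : ℂ) * ((Real.cos γ:ℝ) : ℂ) * Complex.I *
          (((Real.cos (2*β):ℂ) + Complex.I * (Real.sin (2*β):ℂ) * (Real.cos γ:ℂ)^D) ^ k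
            - ((Real.cos (2*β):ℂ) - Complex.I * (Real.sin (2*β):ℂ) * (Real.cos γ:ℂ)^D) ^ k)
        + -(1 / 4 : ℂ) * (Real.sin γ : ℂ) * Complex.I *
          ((Complex.I * (Real.sin (2*β):ℂ) * ((↑D * Real.cos γ ^ (D-1) * (-Real.sin γ) : ℝ):ℂ)) •
              ((k:ℂ) * ((Real.cos (2*β):ℂ) + Complex.I * (Real.sin (2*β):ℂ) * (Real.cos γ:ℂ)^D) ^ (k-1))
            - (-(Complex.I * (Real.sin (2*β):ℂ) * ((↑D * Real.cos γ ^ (D-1) * (-Real.sin γ) : ℝ):ℂ))) •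
              ((k:ℂ) * ((Real.cos (2*β):ℂ) - Complex.I * (Real.sin (2*β):ℂ) * (Real.cos γ:ℂ)^D) ^ (k-1)))) γ := by
    have hA : HasDerivAt (fun g : ℝ => -(1/4:ℂ) * ((Real.sin g:ℝ):ℂ) * Complex.I)
        (-(1/4:ℂ) * ((Real.cos γ:ℝ):ℂ) * Complex.I) γ :=
      (((Real.hasDerivAt_sin γ).ofReal_comp.const_mul (-(1/4:ℂ))).mul_const Complex.I)
    have hm : HasDerivAt (fun g : ℝ => ((Real.cos g:ℝ):ℂ)^D)
        (((↑D * Real.cos γ ^ (D-1) * (-Real.sin γ) : ℝ):ℂ)) γ := by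
      simpa only [Complex.ofReal_pow, Pi.pow_apply] using ((Real.hasDerivAt_cos γ).pow D).ofReal_comp
    have hz : HasDerivAt (fun g : ℝ => (Real.cos (2*β):ℂ) + Complex.I * (Real.sin (2*β):ℂ) * ((Real.cos g:ℝ):ℂ)^D)
        (Complex.I * (Real.sin (2*β):ℂ) * ((↑D * Real.cos γ ^ (D-1) * (-Real.sin γ) : ℝ):ℂ)) γ := by
      have h := (hasDerivAt_const γ ((Real.cos (2*β):ℂ))).add (hm.const_mul (Complex.I * (Real.sin (2*β):ℂ)))
      simp only [zero_add] at h
      exact h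
    have hzb : HasDerivAt (fun g : ℝ => (Real.cos (2*β):ℂ) - Complex.I * (Real.sin (2*β):ℂ) * ((Real.cos g:ℝ):ℂ)^D)
        (-(Complex.I * (Real.sin (2*β):ℂ) * ((↑D * Real.cos γ ^ (D-1) * (-Real.sin γ) : ℝ):ℂ))) γ := by
      have h := (hasDerivAt_const γ ((Real.cos (2*β):ℂ))).sub (hm.const_mul (Complex.I * (Real.sin (2*β):ℂ)))
      simp only [zero_sub] at h
      exact h
    exact hA.mul (((hasDerivAt_pow k _).scomp γ hz).sub ((hasDerivAt_pow k _).scomp γ hzb))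
  rw [hderβ.deriv] at hcritβ
  rw [hderγ.deriv] at hcritγ
  simp only [smul_eq_mul] at hcritβ hcritγ
  -- decompose W = Z^(k-1)
  obtain ⟨a, b, hW⟩ : ∃ a b : ℝ,
      ((Real.cos (2*β):ℂ) + Complex.I * (Real.sin (2*β):ℂ) * (Real.cos γ:ℂ)^D) ^ (k-1)
        = (a:ℂ) + (b:ℂ) * Complex.I :=
    ⟨_, _, (Complex.re_add_im _).symm⟩
  have hconj : ((Real.cos (2*β):ℂ) - Complex.I * (Real.sin (2*β):ℂ) * (Real.cos γ:ℂ)^D)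
      = (starRingEnd ℂ) ((Real.cos (2*β):ℂ) + Complex.I * (Real.sin (2*β):ℂ) * (Real.cos γ:ℂ)^D) := by
    simp only [map_add, map_mul, map_pow, Complex.conj_ofReal, Complex.conj_I]
    ring
  have hWb : ((Real.cos (2*β):ℂ) - Complex.I * (Real.sin (2*β):ℂ) * (Real.cos γ:ℂ)^D) ^ (k-1)
      = (a:ℂ) - (b:ℂ) * Complex.I := by
    rw [hconj, ← map_pow, hW]
    simp only [map_add, map_mul, Complex.conj_ofReal, Complex.conj_I]
    ring
  have hZk : ((Real.cos (2*β):ℂ) + Complex.I * (Real.sin (2*β):ℂ) * (Real.cos γ:ℂ)^D) ^ k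
      = ((Real.cos (2*β):ℂ) + Complex.I * (Real.sin (2*β):ℂ) * (Real.cos γ:ℂ)^D) ^ (k-1)
        * ((Real.cos (2*β):ℂ) + Complex.I * (Real.sin (2*β):ℂ) * (Real.cos γ:ℂ)^D) := by
    conv_lhs => rw [show k = (k-1)+1 by omega]
    rw [pow_succ]
  have hZbk : ((Real.cos (2*β):ℂ) - Complex.I * (Real.sin (2*β):ℂ) * (Real.cos γ:ℂ)^D) ^ k
      = ((Real.cos (2*β):ℂ) - Complex.I * (Real.sin (2*β):ℂ) * (Real.cos γ:ℂ)^D) ^ (k-1)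
        * ((Real.cos (2*β):ℂ) - Complex.I * (Real.sin (2*β):ℂ) * (Real.cos γ:ℂ)^D) := by
    conv_lhs => rw [show k = (k-1)+1 by omega]
    rw [pow_succ]
  rw [hW, hWb] at hcritβ
  rw [hZk, hZbk, hW, hWb] at hcritγ
  push_cast [-Complex.ofReal_sin, -Complex.ofReal_cos] at hcritβ hcritγ
  have hsC : ((Real.sin γ : ℝ):ℂ) ≠ 0 := Complex.ofReal_ne_zero.mpr hs.ne'
  have hkC : ((k:ℕ):ℂ) ≠ 0 := Nat.cast_ne_zero.mpr (by omega)
  -- clean complex equations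
  have E1 : (-(Real.sin (2*β):ℂ) + Complex.I * (Real.cos (2*β):ℂ) * (Real.cos γ:ℂ)^D) * ((a:ℂ) + (b:ℂ)*Complex.I)
      = (-(Real.sin (2*β):ℂ) - Complex.I * (Real.cos (2*β):ℂ) * (Real.cos γ:ℂ)^D) * ((a:ℂ) - (b:ℂ)*Complex.I) := by
    have h0 : (-(1/2:ℂ) * (Real.sin γ:ℂ) * (k:ℂ) * Complex.I) *
          ((-(Real.sin (2*β):ℂ) + Complex.I * (Real.cos (2*β):ℂ) * (Real.cos γ:ℂ)^D) * ((a:ℂ) + (b:ℂ)*Complex.I))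
        = (-(1/2:ℂ) * (Real.sin γ:ℂ) * (k:ℂ) * Complex.I) *
          ((-(Real.sin (2*β):ℂ) - Complex.I * (Real.cos (2*β):ℂ) * (Real.cos γ:ℂ)^D) * ((a:ℂ) - (b:ℂ)*Complex.I)) := by
      linear_combination hcritβ
    exact mul_left_cancel₀ (by
      refine mul_ne_zero (mul_ne_zero (mul_ne_zero (by norm_num) hsC) hkC) Complex.I_ne_zero) h0
  have E2 : (Real.cos γ:ℂ) * (((a:ℂ) + (b:ℂ)*Complex.I) * ((Real.cos (2*β):ℂ) + Complex.I * (Real.sin (2*β):ℂ) * (Real.cos γ:ℂ)^D)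
        - ((a:ℂ) - (b:ℂ)*Complex.I) * ((Real.cos (2*β):ℂ) - Complex.I * (Real.sin (2*β):ℂ) * (Real.cos γ:ℂ)^D))
      + (Real.sin γ:ℂ) * (Complex.I * (Real.sin (2*β):ℂ) * ((D:ℂ) * (Real.cos γ:ℂ)^(D-1) * (-(Real.sin γ:ℂ))) * (k:ℂ))
        * (((a:ℂ) + (b:ℂ)*Complex.I) + ((a:ℂ) - (b:ℂ)*Complex.I)) = 0 := by
    have h0 : (-(1/4:ℂ) * Complex.I) *
        ((Real.cos γ:ℂ) * (((a:ℂ) + (b:ℂ)*Complex.I) * ((Real.cos (2*β):ℂ) + Complex.I * (Real.sin (2*β):ℂ) * (Real.cos γ:ℂ)^D)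
            - ((a:ℂ) - (b:ℂ)*Complex.I) * ((Real.cos (2*β):ℂ) - Complex.I * (Real.sin (2*β):ℂ) * (Real.cos γ:ℂ)^D))
          + (Real.sin γ:ℂ) * (Complex.I * (Real.sin (2*β):ℂ) * ((D:ℂ) * (Real.cos γ:ℂ)^(D-1) * (-(Real.sin γ:ℂ))) * (k:ℂ))
            * (((a:ℂ) + (b:ℂ)*Complex.I) + ((a:ℂ) - (b:ℂ)*Complex.I)))
        = (-(1/4:ℂ) * Complex.I) * 0 := by
      rw [mul_zero]
      linear_combination hcritγ
    exact mul_left_cancel₀ (mul_ne_zero (by norm_num) Complex.I_ne_zero) h0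
  -- extract real equations
  rw [show ((Real.cos γ:ℂ))^D = ((Real.cos γ^D : ℝ):ℂ) from (Complex.ofReal_pow _ _).symm] at E1 E2
  rw [show ((Real.cos γ:ℂ))^(D-1) = ((Real.cos γ^(D-1) : ℝ):ℂ) from (Complex.ofReal_pow _ _).symm] at E2
  have h1 := congrArg Complex.im E1
  have h2 := congrArg Complex.im E2
  simp only [Complex.add_im, Complex.add_re, Complex.sub_im, Complex.sub_re, Complex.mul_im,
    Complex.mul_re, Complex.neg_im, Complex.neg_re, Complex.I_re, Complex.I_im,
    Complex.ofReal_re, Complex.ofReal_im, Complex.natCast_re, Complex.natCast_im,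
    Complex.zero_im, Complex.zero_re] at h1 h2
  have f1 : Real.cos (2*β) * Real.cos γ^D * a = Real.sin (2*β) * b := by
    linear_combination h1 / 2
  have f2 : Real.cos γ * (a * Real.sin (2*β) * Real.cos γ^D + b * Real.cos (2*β))
      = (k:ℝ) * (D:ℝ) * Real.sin γ^2 * Real.sin (2*β) * Real.cos γ^(D-1) * a := by
    linear_combination h2 / 2
  -- a ≠ 0
  have hmpos : (0:ℝ) < Real.cos γ ^ D := pow_pos hc D
  have ha : a ≠ 0 := by
    intro ha0
    have hb0 : b = 0 := by
      have := f1
      rw [ha0] at this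
      simpa [hq.ne'] using this.symm
    have hZ0 : ((Real.cos (2*β):ℂ) + Complex.I * (Real.sin (2*β):ℂ) * (Real.cos γ:ℂ)^D) ^ (k-1) = 0 := by
      rw [hW, ha0, hb0]; simp
    have hZ : ((Real.cos (2*β):ℂ) + Complex.I * (Real.sin (2*β):ℂ) * (Real.cos γ:ℂ)^D) = 0 :=
      pow_eq_zero_iff (by omega) |>.mp hZ0
    have := congrArg Complex.im hZ
    rw [show ((Real.cos γ:ℂ))^D = ((Real.cos γ^D : ℝ):ℂ) from (Complex.ofReal_pow _ _).symm] at this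
    simp only [Complex.add_im, Complex.mul_im, Complex.mul_re, Complex.I_re, Complex.I_im,
      Complex.ofReal_re, Complex.ofReal_im, Complex.zero_im] at this
    nlinarith [hq, hmpos]
  -- key equation
  have hp2 : Real.sin (2*β)^2 + Real.cos (2*β)^2 = 1 := Real.sin_sq_add_cos_sq (2*β)
  have hpow : Real.cos γ * Real.cos γ^D = Real.cos γ^(D-1) * Real.cos γ^2 := by
    rw [show D = (D-1)+1 by omega]
    simp only [Nat.add_sub_cancel]
    ring
  have keyA : Real.cos γ^(D-1) * Real.cos γ^2 * a
      = Real.cos γ^(D-1) * ((k:ℝ) * (D:ℝ) * Real.sin γ^2 * Real.sin (2*β)^2) * a := by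
    linear_combination Real.sin (2*β) * f2 + Real.cos γ * Real.cos (2*β) * f1
      - Real.cos γ * Real.cos γ^D * a * hp2 - a * hpow
  have key : Real.cos γ^2 = (k:ℝ) * (D:ℝ) * Real.sin γ^2 * Real.sin (2*β)^2 := by
    have h' := mul_right_cancel₀ ha keyA
    exact mul_left_cancel₀ (pow_pos hc (D-1)).ne' h'
  -- conclude
  have hkd : (0:ℝ) < (k:ℝ) * (D:ℝ) := by
    have h1 : (0:ℝ) < (k:ℝ) := by exact_mod_cast (show 0 < k by omega)
    have h2 : (0:ℝ) < (D:ℝ) := by exact_mod_cast hD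
    positivity
  have hsqrt : Real.sqrt ((k:ℝ) * (D:ℝ)) ^ 2 = (k:ℝ) * (D:ℝ) := Real.sq_sqrt hkd.le
  have hsqrtpos : 0 < Real.sqrt ((k:ℝ) * (D:ℝ)) := Real.sqrt_pos.mpr hkd
  rw [eq_div_iff (by positivity)]
  have hfact : (Real.sin (2*β) * (Real.sin γ * Real.sqrt ((k:ℝ)*(D:ℝ))) - Real.cos γ)
      * (Real.sin (2*β) * (Real.sin γ * Real.sqrt ((k:ℝ)*(D:ℝ))) + Real.cos γ) = 0 := by
    have : (Real.sin (2*β) * (Real.sin γ * Real.sqrt ((k:ℝ)*(D:ℝ))))^2 = Real.cos γ^2 := by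
      rw [mul_pow, mul_pow, hsqrt]
      linear_combination -key
    linear_combination this
  rcases mul_eq_zero.mp hfact with h | h
  · linarith
  · have hX : 0 < Real.sin (2*β) * (Real.sin γ * Real.sqrt ((k:ℝ)*(D:ℝ))) := by positivity
    linarith
end
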